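/- arXiv:0904.0562 — 3 statements merged into one kernel-verified Lean document; each statement's English description precedes it below -/
import Mathlib

section
/- For any word u over a two-letter alphabet, the derivative of the reversal equals the reversal of the derivative: D(ũ) = (D(u))~, where ũ denotes the mirror image of u. -/
/-- Run-length encoding Δ: the list of lengths of maximal runs. -/
def rle (w : List ℕ) : List ℕ := (w.splitBy (· == ·)).map List.length

/-- Trim the first entry if it is less than `b`. -/
def trimF (b : ℕ) : List ℕ → List ℕ
  | [] => []
  | x :: xs => if x < b then xs else x :: xs

/-- The derivative D: run lengths, dropping boundary runs shorter than `b`. -/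
def derW (b : ℕ) (w : List ℕ) : List ℕ :=
  (trimF b ((trimF b (rle w)).reverse)).reverse

/-- `w` is a word over the alphabet `{a, b}`. -/
def WordOver (a b : ℕ) (w : List ℕ) : Prop := ∀ c ∈ w, c = a ∨ c = b

/-- `w` is differentiable: all runs have length at most `b`, and all
interior runs have length exactly `a` or `b`. -/
def DiffW (a b : ℕ) (w : List ℕ) : Prop :=
  (∀ t ∈ rle w, t ≤ b) ∧ (∀ t ∈ ((rle w).drop 1).dropLast, t = a ∨ t = b)

/-- The closure ŵ: extend the first (resp. last) run to length `b`
if its length is strictly greater than `a`. -/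
def clos (a b : ℕ) (w : List ℕ) : List ℕ :=
  (if a < (rle w).headD 0 then List.replicate (b - (rle w).headD 0) (w.headD 0) else [])
    ++ w ++
  (if a < (rle w).getLastD 0 then List.replicate (b - (rle w).getLastD 0) (w.getLastD 0) else [])

/-- ρ(w) = D(ŵ). -/
def rhoW (a b : ℕ) (w : List ℕ) : List ℕ := derW b (clos a b w)

/-- `w` is a smooth (C^∞_{a,b}) word: it is a word over `{a,b}`, every iterated
closure is differentiable, and iterating ρ eventually yields the empty word. -/
def SmoothW (a b : ℕ) (w : List ℕ) : Prop :=
  WordOver a b w ∧ (∀ k : ℕ, DiffW a b (clos a b ((rhoW a b)^[k] w))) ∧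
    ∃ k : ℕ, (rhoW a b)^[k] w = []

/-- n-th power of a word (n-fold concatenation). -/
def lpow (u : List ℕ) (n : ℕ) : List ℕ := (List.replicate n u).flatten

/-- The pseudo-inverse Δ_α^{-1}: maps u₁u₂u₃⋯ to α^{u₁} β^{u₂} α^{u₃} ⋯ . -/
def dinv (α β : ℕ) : List ℕ → List ℕ
  | [] => []
  | t :: ts => List.replicate t α ++ dinv β α ts

open List

variable {α : Type*}

private theorem loop_app (R : α → α → Bool) (l : List α) (a : α) (g : List α)
    (gs : List (List α)) :
    splitBy.loop R l a g gs = gs.reverse ++ splitBy.loop R l a g [] := by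
  induction l generalizing a g gs with
  | nil => simp [splitBy.loop]
  | cons b l IH =>
    simp_rw [splitBy.loop]
    split <;> rw [IH]
    conv_rhs => rw [IH]
    simp

private theorem loop_head (R : α → α → Bool) (l : List α) (a : α) (g : List α) :
    splitBy.loop R l a g [] = (splitBy.loop R l a [] []).modifyHead (g.reverse ++ ·) := by
  induction l generalizing a g with
  | nil => simp [splitBy.loop]
  | cons b l IH =>
    simp_rw [splitBy.loop]
    split
    · rw [IH, IH b [a]]
      cases h : splitBy.loop R l b [] [] <;> simp
    · rw [loop_app]
      conv_rhs => rw [loop_app]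
      cases h : splitBy.loop R l b [] [] <;> simp

theorem splitBy_cons2 (R : α → α → Bool) (a b : α) (t : List α) :
    splitBy R (a :: b :: t) =
      if R a b then (splitBy R (b :: t)).modifyHead (a :: ·)
      else [a] :: splitBy R (b :: t) := by
  show splitBy.loop R (b :: t) a [] [] = _
  rw [splitBy.loop]
  split
  · rw [loop_head]
    simp_all [splitBy]
  · rw [loop_app]
    simp_all [splitBy]

theorem splitBy_ne_nil (R : α → α → Bool) (a : α) (l : List α) :
    splitBy R (a :: l) ≠ [] := by
  intro h
  have := flatten_splitBy R (a :: l)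
  rw [h] at this
  simp at this

theorem run_prepend (R : α → α → Bool) (hrefl : ∀ x, R x x = true)
    (k : ℕ) (x : α) (r : List α) (hr : ∀ c ∈ r.head?, R x c = false) :
    splitBy R (replicate (k+1) x ++ r) = replicate (k+1) x :: splitBy R r := by
  induction k with
  | zero =>
    cases r with
    | nil => rfl
    | cons c t =>
      have : R x c = false := hr c rfl
      simp [splitBy_cons2, this]
  | succ k IH =>
    have h1 : replicate (k+1+1) x ++ r = x :: (x :: (replicate k x ++ r)) := by
      simp [replicate_succ]
    have h2 : replicate (k+1) x ++ r = x :: (replicate k x ++ r) := by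
      simp [replicate_succ]
    rw [h1, splitBy_cons2, hrefl, ← h2, IH]
    simp [replicate_succ]

theorem run_append (R : α → α → Bool) (hrefl : ∀ x, R x x = true)
    (k : ℕ) (x : α) : ∀ (l : List α), (∀ c ∈ l.getLast?, R c x = false) →
    splitBy R (l ++ replicate (k+1) x) = splitBy R l ++ [replicate (k+1) x]
  | [], _ => by simpa using run_prepend R hrefl k x [] (by simp)
  | [c], hl => by
    have hc : R c x = false := hl c rfl
    have : [c] ++ replicate (k+1) x = c :: (x :: replicate k x) := by
      simp [replicate_succ]
    rw [this, splitBy_cons2, hc]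
    have h3 : x :: replicate k x = replicate (k+1) x ++ [] := by simp [replicate_succ]
    rw [h3, run_prepend R hrefl k x [] (by simp)]
    rfl
  | c :: d :: t, hl => by
    have hl' : ∀ e ∈ (d :: t).getLast?, R e x = false := by
      intro e he; exact hl e (by simpa using he)
    have IH := run_append R hrefl k x (d :: t) hl'
    have h1 : (c :: d :: t) ++ replicate (k+1) x = c :: d :: (t ++ replicate (k+1) x) := by simp
    rw [h1, splitBy_cons2]
    have h2 : d :: (t ++ replicate (k+1) x) = (d :: t) ++ replicate (k+1) x := by simp
    rw [h2, IH, splitBy_cons2]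
    obtain ⟨g, gs, hg⟩ : ∃ g gs, splitBy R (d :: t) = g :: gs := by
      cases h : splitBy R (d :: t) with
      | nil => exact absurd h (splitBy_ne_nil R d t)
      | cons g gs => exact ⟨g, gs, rfl⟩
    rw [hg]
    split <;> simp

theorem splitBy_rev : ∀ (l : List ℕ),
    splitBy (· == ·) l.reverse = ((splitBy (· == ·) l).map List.reverse).reverse
  | [] => rfl
  | x :: t => by
    set r := t.dropWhile (· == x) with hr
    set k := (t.takeWhile (· == x)).length with hk
    have htake : t.takeWhile (· == x) = replicate k x := by
      apply eq_replicate_of_mem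
      intro c hc
      have := mem_takeWhile_imp hc
      simpa using this.symm
    have hdecomp : x :: t = replicate (k+1) x ++ r := by
      conv_lhs => rw [← takeWhile_append_dropWhile (p := (· == x)) (l := t)]
      rw [htake, ← hr]
      simp [replicate_succ]
    have hrhead : ∀ c ∈ r.head?, (x == c) = false := by
      intro c hc
      have h0 := head?_dropWhile_not (· == x) t
      rw [← hr] at h0
      rw [hc] at h0
      simp only at h0
      simp only [beq_eq_false_iff_ne] at h0 ⊢
      exact fun h => h0 h.symm
    have hlen : r.length < (x :: t).length := by
      have : r.length ≤ t.length := (dropWhile_sublist _).length_le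
      simpa using Nat.lt_succ_of_le this
    have IH := splitBy_rev r
    have hfront := run_prepend (· == ·) (fun y => by simp) k x r hrhead
    have hback : splitBy (· == ·) ((x :: t).reverse)
        = splitBy (· == ·) r.reverse ++ [replicate (k+1) x] := by
      rw [hdecomp, reverse_append, reverse_replicate]
      apply run_append (· == ·) (fun y => by simp)
      intro c hc
      rw [getLast?_reverse] at hc
      have := hrhead c hc
      simpa [beq_eq_false_iff_ne, ne_comm] using this
    rw [hback, IH, hdecomp, hfront]
    simp
termination_by l => l.length
decreasing_by exact hlen

theorem rle_rev (l : List ℕ) : rle l.reverse = (rle l).reverse := by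
  unfold rle
  rw [splitBy_rev, map_reverse, map_map]
  congr 1
  apply map_congr_left
  intro g _
  simp

theorem trimF_cons (b x : ℕ) (xs : List ℕ) :
    trimF b (x :: xs) = if x < b then xs else x :: xs := rfl

theorem trim_key (b : ℕ) (L : List ℕ) :
    (trimF b ((trimF b L.reverse).reverse)).reverse = trimF b ((trimF b L).reverse) := by
  cases L with
  | nil => rfl
  | cons x M =>
    rcases M.eq_nil_or_concat with rfl | ⟨M', y, rfl⟩
    · by_cases hx : x < b <;> simp [trimF_cons, trimF, hx]
    · rw [concat_eq_append]
      have e1 : (x :: (M' ++ [y])).reverse = y :: (M'.reverse ++ [x]) := by simp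
      rw [e1, trimF_cons]
      by_cases hy : y < b <;> by_cases hx : x < b <;>
        simp [hy, hx, trimF_cons, trimF]

theorem stmt1 (a b : ℕ) (ha : 0 < a) (hab : a < b) (u : List ℕ)
    (hw : WordOver a b u) :
    derW b u.reverse = (derW b u).reverse := by
  unfold derW
  rw [rle_rev, reverse_reverse]
  exact trim_key b (rle u)
end

section
/- Over the alphabet {1,3}, the word ((1³)·3·1·3·(1³)·3)⁴ = (111313111 3)⁴ is a smooth word; hence there exist smooth biquadrates (fourth powers) over {1,3}, and by applying the inverse run-length operators there are infinitely many smooth fourth powers over {1,3}. -/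
namespace Stmt15Aux

instance (a b : ℕ) (w : List ℕ) : Decidable (DiffW a b w) := by
  unfold DiffW; exact inferInstance

instance (a b : ℕ) (w : List ℕ) : Decidable (WordOver a b w) := by
  unfold WordOver; exact inferInstance

/-- The chain condition (second and third conjuncts of `SmoothW`). -/
def ChainP (w : List ℕ) : Prop :=
  (∀ k : ℕ, DiffW 1 3 (clos 1 3 ((rhoW 1 3)^[k] w))) ∧ ∃ k : ℕ, (rhoW 1 3)^[k] w = []

lemma rho_nil : rhoW 1 3 [] = [] := rfl

lemma chain_of (w : List ℕ) (K : ℕ)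
    (h1 : ∀ k < K, DiffW 1 3 (clos 1 3 ((rhoW 1 3)^[k] w)))
    (h2 : (rhoW 1 3)^[K] w = []) : ChainP w := by
  refine ⟨fun k => ?_, K, h2⟩
  by_cases hk : k < K
  · exact h1 k hk
  · have hnil : (rhoW 1 3)^[k] w = [] := by
      have hke : k = (k - K) + K := by omega
      rw [hke, Function.iterate_add_apply, h2, Function.iterate_fixed rho_nil]
    rw [hnil]
    decide

lemma chain_step {w : List ℕ} (h1 : DiffW 1 3 (clos 1 3 w))
    (h2 : ChainP (rhoW 1 3 w)) : ChainP w := by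
  obtain ⟨ha, K, hK⟩ := h2
  refine ⟨fun k => ?_, K + 1, ?_⟩
  · cases k with
    | zero => exact h1
    | succ k => rw [Function.iterate_succ_apply]; exact ha k
  · rw [Function.iterate_succ_apply]; exact hK

lemma splitBy_loop_append (r : ℕ → ℕ → Bool) (l : List ℕ) (a : ℕ) (g : List ℕ)
    (gs : List (List ℕ)) :
    List.splitBy.loop r l a g gs = gs.reverse ++ List.splitBy.loop r l a g [] := by
  induction l generalizing a g gs with
  | nil => simp [List.splitBy.loop]
  | cons b l IH =>
    simp only [List.splitBy.loop]
    split <;> rw [IH]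
    conv_rhs => rw [IH]
    simp

lemma splitBy_loop_replicate (a : ℕ) (l : List ℕ)
    (h : ∀ b ∈ l.head?, (a == b) = false) (k : ℕ) :
    ∀ g : List ℕ,
      List.splitBy.loop (· == ·) (List.replicate k a ++ l) a g []
        = (g.reverse ++ List.replicate (k + 1) a) :: l.splitBy (· == ·) := by
  induction k with
  | zero =>
    intro g
    cases l with
    | nil => simp [List.splitBy.loop, List.replicate]
    | cons b bs =>
      have hab : (a == b) = false := h b rfl
      simp only [List.replicate, List.nil_append, List.splitBy.loop, hab]
      rw [splitBy_loop_append]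
      simp [List.splitBy, List.replicate]
  | succ k IH =>
    intro g
    have haa : (a == a) = true := beq_self_eq_true a
    simp only [List.replicate_succ, List.cons_append, List.splitBy.loop, haa]
    rw [IH (a :: g)]
    simp [List.replicate_succ, List.append_assoc]

lemma rle_cons_replicate (k a : ℕ) (l : List ℕ) (hk : 0 < k)
    (h : ∀ b ∈ l.head?, a ≠ b) :
    rle (List.replicate k a ++ l) = k :: rle l := by
  obtain ⟨k, rfl⟩ : ∃ k', k = k' + 1 := ⟨k - 1, by omega⟩
  have he : List.replicate (k + 1) a ++ l = a :: (List.replicate k a ++ l) := by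
    rw [List.replicate_succ, List.cons_append]
  unfold rle
  rw [he]
  show (List.splitBy.loop (· == ·) (List.replicate k a ++ l) a [] []).map List.length = _
  rw [splitBy_loop_replicate a l (fun b hb => by simpa using h b hb) k []]
  simp

lemma dinv_cons (α β t : ℕ) (ts : List ℕ) :
    dinv α β (t :: ts) = List.replicate t α ++ dinv β α ts := rfl

lemma dinv_ne_nil {z : List ℕ} (α β : ℕ) (hz : z ≠ []) (hpos : ∀ t ∈ z, 0 < t) :
    dinv α β z ≠ [] := by
  cases z with
  | nil => exact absurd rfl hz
  | cons t ts =>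
    have ht : 0 < t := hpos t (by simp)
    rw [dinv_cons]
    intro hh
    rw [List.append_eq_nil_iff] at hh
    have := hh.1
    rw [List.replicate_eq_nil_iff] at this
    omega

lemma head?_dinv {z : List ℕ} (α β : ℕ) (hz : z ≠ []) (hpos : ∀ t ∈ z, 0 < t) :
    (dinv α β z).head? = some α := by
  cases z with
  | nil => exact absurd rfl hz
  | cons t ts =>
    have ht : 0 < t := hpos t (by simp)
    obtain ⟨t, rfl⟩ : ∃ t', t = t' + 1 := ⟨t - 1, by omega⟩
    rw [dinv_cons, List.replicate_succ, List.cons_append, List.head?_cons]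

lemma rle_dinv : ∀ (z : List ℕ) (α β : ℕ), α ≠ β → (∀ t ∈ z, 0 < t) →
    rle (dinv α β z) = z := by
  intro z
  induction z with
  | nil => intro α β _ _; rfl
  | cons t ts IH =>
    intro α β hne hpos
    have hh : ∀ b ∈ (dinv β α ts).head?, α ≠ b := by
      intro b hb
      cases ts with
      | nil => simp [dinv] at hb
      | cons t' ts' =>
        rw [head?_dinv β α (by simp) (fun x hx => hpos x (List.mem_cons_of_mem _ hx))] at hb
        simp at hb
        subst hb
        exact hne
    rw [dinv_cons, rle_cons_replicate t α _ (hpos t (by simp)) hh,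
      IH β α (Ne.symm hne) (fun x hx => hpos x (List.mem_cons_of_mem _ hx))]

lemma length_dinv : ∀ (z : List ℕ) (α β : ℕ), (dinv α β z).length = z.sum
  | [], _, _ => rfl
  | t :: ts, α, β => by
    rw [dinv_cons, List.length_append, List.length_replicate, length_dinv ts β α,
      List.sum_cons]

lemma mem_dinv : ∀ (z : List ℕ) (α β c : ℕ), c ∈ dinv α β z → c = α ∨ c = β
  | [], _, _, _, hc => by simp [dinv] at hc
  | t :: ts, α, β, c, hc => by
    rw [dinv_cons, List.mem_append] at hc
    rcases hc with hc | hc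
    · exact Or.inl (List.eq_of_mem_replicate hc)
    · exact (mem_dinv ts β α c hc).symm

lemma getLast?_dinv : ∀ (z : List ℕ) (α β : ℕ), z ≠ [] → (∀ t ∈ z, 0 < t) →
    (dinv α β z).getLast? = some (if Even z.length then β else α)
  | [], _, _, hz, _ => absurd rfl hz
  | [t], α, β, _, hpos => by
    have ht : 0 < t := hpos t (by simp)
    obtain ⟨t, rfl⟩ : ∃ t', t = t' + 1 := ⟨t - 1, by omega⟩
    show (List.replicate (t + 1) α ++ []).getLast? = _
    rw [List.append_nil, List.replicate_succ', List.getLast?_concat]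
    norm_num
  | t :: t' :: ts, α, β, _, hpos => by
    rw [dinv_cons, List.getLast?_append,
      getLast?_dinv (t' :: ts) β α (by simp) (fun x hx => hpos x (List.mem_cons_of_mem _ hx)),
      Option.some_or]
    by_cases he : Even ts.length <;>
      simp [List.length_cons, Nat.even_add_one, he, Nat.not_even_iff_odd]

lemma dinv_append : ∀ (u v : List ℕ) (α β : ℕ),
    dinv α β (u ++ v)
      = dinv α β u ++ (if Even u.length then dinv α β v else dinv β α v)
  | [], v, α, β => by simp [dinv]
  | t :: ts, v, α, β => by
    rw [List.cons_append, dinv_cons, dinv_append ts v β α, dinv_cons, List.append_assoc]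
    congr 1
    congr 1
    by_cases h : Even ts.length <;> simp [h, List.length_cons, Nat.even_add_one]

lemma dinv_append_even {u : List ℕ} (v : List ℕ) (α β : ℕ) (h : Even u.length) :
    dinv α β (u ++ v) = dinv α β u ++ dinv α β v := by
  rw [dinv_append, if_pos h]

lemma dinv_lpow4 (u : List ℕ) (α β : ℕ) (h : Even u.length) :
    dinv α β (lpow u 4) = lpow (dinv α β u) 4 := by
  have e1 : lpow u 4 = u ++ (u ++ (u ++ (u ++ []))) := rfl
  have e2 : lpow (dinv α β u) 4
      = dinv α β u ++ (dinv α β u ++ (dinv α β u ++ (dinv α β u ++ []))) := rfl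
  rw [e1, e2, dinv_append_even _ _ _ h, dinv_append_even _ _ _ h,
    dinv_append_even _ _ _ h, dinv_append_even _ _ _ h]
  rfl

lemma sum_mod_two : ∀ z : List ℕ, (∀ t ∈ z, t = 1 ∨ t = 3) → z.sum % 2 = z.length % 2
  | [], _ => rfl
  | t :: ts, h => by
    have ht := h t (by simp)
    have := sum_mod_two ts (fun x hx => h x (List.mem_cons_of_mem _ hx))
    rw [List.sum_cons, List.length_cons]
    omega

lemma length_le_sum : ∀ z : List ℕ, (∀ t ∈ z, 0 < t) → z.length ≤ z.sum
  | [], _ => le_refl 0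
  | t :: ts, h => by
    have := length_le_sum ts (fun x hx => h x (List.mem_cons_of_mem _ hx))
    have ht := h t (by simp)
    rw [List.sum_cons, List.length_cons]
    omega

lemma lt_sum_of_three : ∀ z : List ℕ, (∀ t ∈ z, 0 < t) → 3 ∈ z → z.length < z.sum
  | [], _, h3 => by simp at h3
  | t :: ts, hpos, h3 => by
    have hts := length_le_sum ts (fun x hx => hpos x (List.mem_cons_of_mem _ hx))
    have ht := hpos t (by simp)
    rw [List.sum_cons, List.length_cons]
    rcases List.mem_cons.mp h3 with rfl | h3
    · omega
    · have := lt_sum_of_three ts (fun x hx => hpos x (List.mem_cons_of_mem _ hx)) h3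
      omega

lemma clos_eq_self {v : List ℕ} (h1 : (rle v).headD 0 = 1 ∨ (rle v).headD 0 = 3)
    (h2 : (rle v).getLastD 0 = 1 ∨ (rle v).getLastD 0 = 3) : clos 1 3 v = v := by
  unfold clos
  rcases h1 with h1 | h1 <;> rcases h2 with h2 | h2 <;> rw [h1, h2] <;> simp

lemma pos_of_13 {z : List ℕ} (h13 : ∀ t ∈ z, t = 1 ∨ t = 3) : ∀ t ∈ z, 0 < t := by
  intro t ht; rcases h13 t ht with rfl | rfl <;> omega

lemma clos_dinv {z : List ℕ} (hz : z ≠ []) (h13 : ∀ t ∈ z, t = 1 ∨ t = 3) :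
    clos 1 3 (dinv 3 1 z) = dinv 3 1 z := by
  have hr : rle (dinv 3 1 z) = z := rle_dinv z 3 1 (by omega) (pos_of_13 h13)
  apply clos_eq_self <;> rw [hr]
  · cases z with
    | nil => exact absurd rfl hz
    | cons t ts => exact h13 t (by simp)
  · have : z.getLastD 0 ∈ z := by
      cases z with
      | nil => exact absurd rfl hz
      | cons t ts =>
        rw [List.getLastD_eq_getLast?, List.getLast?_eq_getLast (by simp),
          Option.getD_some]
        exact List.getLast_mem _
    exact h13 _ this

lemma rho_dinv {z : List ℕ} (hz : z ≠ []) (h13 : ∀ t ∈ z, t = 1 ∨ t = 3) :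
    rhoW 1 3 (dinv 3 1 z) = (trimF 3 ((trimF 3 z).reverse)).reverse := by
  have hr : rle (dinv 3 1 z) = z := rle_dinv z 3 1 (by omega) (pos_of_13 h13)
  rw [rhoW, clos_dinv hz h13]
  unfold derW
  rw [hr]

lemma trimF_of_head3 {z : List ℕ} (h : z.head? = some 3) : trimF 3 z = z := by
  cases z with
  | nil => rfl
  | cons t ts =>
    rw [List.head?_cons, Option.some_inj] at h
    subst h
    simp [trimF]

lemma trm_eq_self {z : List ℕ} (h1 : z.head? = some 3) (h2 : z.getLast? = some 3) :
    (trimF 3 ((trimF 3 z).reverse)).reverse = z := by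
  rw [trimF_of_head3 h1, trimF_of_head3 (by rw [List.head?_reverse]; exact h2),
    List.reverse_reverse]

lemma trm_append_one {z : List ℕ} (h1 : z.head? = some 3) :
    (trimF 3 ((trimF 3 (z ++ [1])).reverse)).reverse = z := by
  have hz : z ≠ [] := by rintro rfl; simp at h1
  have hh : (z ++ [1]).head? = some 3 := by
    rw [List.head?_append_of_ne_nil _ hz]; exact h1
  rw [trimF_of_head3 hh, List.reverse_append]
  show (trimF 3 (1 :: z.reverse)).reverse = z
  simp [trimF]

lemma diffW_of_rle13 {v : List ℕ} (h : ∀ t ∈ rle v, t = 1 ∨ t = 3) : DiffW 1 3 v :=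
  ⟨fun t ht => by rcases h t ht with rfl | rfl <;> omega,
   fun t ht => h t (List.drop_subset _ _ (List.dropLast_subset _ ht))⟩

lemma diffW_clos_dinv {z : List ℕ} (hz : z ≠ []) (h13 : ∀ t ∈ z, t = 1 ∨ t = 3) :
    DiffW 1 3 (clos 1 3 (dinv 3 1 z)) := by
  rw [clos_dinv hz h13]
  exact diffW_of_rle13 (by rw [rle_dinv z 3 1 (by omega) (pos_of_13 h13)]; exact h13)

/-! ### The concrete sequences -/

def u0 : List ℕ := [1, 1, 1, 3, 1, 3, 1, 1, 1, 3]

def fseq (n : ℕ) : List ℕ := (dinv 3 1)^[n] u0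

def wseq (n : ℕ) : List ℕ := lpow (fseq n) 4

def z1 : List ℕ := (dinv 3 1 (lpow u0 4)).dropLast

def Zseq (m : ℕ) : List ℕ := (dinv 3 1)^[m] z1

lemma fseq_succ (n : ℕ) : fseq (n + 1) = dinv 3 1 (fseq n) :=
  Function.iterate_succ_apply' _ _ _

lemma Zseq_succ (m : ℕ) : Zseq (m + 1) = dinv 3 1 (Zseq m) :=
  Function.iterate_succ_apply' _ _ _

lemma mem_fseq : ∀ n, ∀ c ∈ fseq n, c = 1 ∨ c = 3
  | 0 => by decide
  | n + 1 => by
    rw [fseq_succ]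
    intro c hc
    exact (mem_dinv _ 3 1 c hc).symm

lemma fseq_ne_nil : ∀ n, fseq n ≠ []
  | 0 => by decide
  | n + 1 => by
    rw [fseq_succ]
    exact dinv_ne_nil 3 1 (fseq_ne_nil n) (pos_of_13 (mem_fseq n))

lemma even_len_fseq : ∀ n, Even (fseq n).length
  | 0 => by decide
  | n + 1 => by
    rw [fseq_succ, length_dinv]
    have h1 := sum_mod_two (fseq n) (mem_fseq n)
    have h2 := even_len_fseq n
    rw [Nat.even_iff] at h2 ⊢
    omega

lemma wseq_succ (n : ℕ) : wseq (n + 1) = dinv 3 1 (wseq n) := by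
  rw [wseq, wseq, fseq_succ, dinv_lpow4 _ _ _ (even_len_fseq n)]

lemma mem_wseq (n : ℕ) : ∀ c ∈ wseq n, c = 1 ∨ c = 3 := by
  intro c hc
  apply mem_fseq n
  rw [wseq, lpow] at hc
  rw [List.mem_flatten] at hc
  obtain ⟨l, hl, hcl⟩ := hc
  rwa [(List.eq_of_mem_replicate hl : l = fseq n)] at hcl

lemma wseq_ne_nil (n : ℕ) : wseq n ≠ [] := by
  have h : wseq n = fseq n ++ (fseq n ++ (fseq n ++ (fseq n ++ []))) := rfl
  rw [h]
  intro hh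
  rw [List.append_eq_nil_iff] at hh
  exact fseq_ne_nil n hh.1

lemma mem_Zseq : ∀ m, ∀ c ∈ Zseq m, c = 1 ∨ c = 3
  | 0 => by decide
  | m + 1 => by
    rw [Zseq_succ]
    intro c hc
    exact (mem_dinv _ 3 1 c hc).symm

lemma Zseq_ne_nil : ∀ m, Zseq m ≠ []
  | 0 => by decide
  | m + 1 => by
    rw [Zseq_succ]
    exact dinv_ne_nil 3 1 (Zseq_ne_nil m) (pos_of_13 (mem_Zseq m))

lemma odd_len_Zseq : ∀ m, ¬ Even (Zseq m).length
  | 0 => by decide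
  | m + 1 => by
    rw [Zseq_succ, length_dinv]
    have h1 := sum_mod_two (Zseq m) (mem_Zseq m)
    have h2 := odd_len_Zseq m
    rw [Nat.even_iff] at h2 ⊢
    omega

lemma head?_Zseq : ∀ m, (Zseq m).head? = some 3
  | 0 => by decide
  | m + 1 => by
    rw [Zseq_succ]
    exact head?_dinv 3 1 (Zseq_ne_nil m) (pos_of_13 (mem_Zseq m))

lemma getLast?_Zseq (m : ℕ) : (Zseq (m + 1)).getLast? = some 3 := by
  rw [Zseq_succ, getLast?_dinv _ 3 1 (Zseq_ne_nil m) (pos_of_13 (mem_Zseq m)),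
    if_neg (odd_len_Zseq m)]

lemma chain_Zseq : ∀ m, ChainP (Zseq m) := by
  intro m
  induction m with
  | zero => exact chain_of _ 7 (by decide) (by decide)
  | succ m ih =>
    rw [Zseq_succ]
    refine chain_step (diffW_clos_dinv (Zseq_ne_nil m) (mem_Zseq m)) ?_
    rw [rho_dinv (Zseq_ne_nil m) (mem_Zseq m)]
    cases m with
    | zero => exact chain_of _ 7 (by decide) (by decide)
    | succ m' =>
      rw [trm_eq_self (head?_Zseq (m' + 1)) (getLast?_Zseq m')]
      exact ih

lemma wz : ∀ n, wseq (n + 1) = Zseq n ++ [1]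
  | 0 => by
    rw [wseq_succ]
    show dinv 3 1 (lpow u0 4) = Zseq 0 ++ [1]
    decide
  | n + 1 => by
    rw [wseq_succ, wz n, dinv_append, if_neg (odd_len_Zseq n), Zseq_succ]
    rfl

lemma chain_wseq : ∀ n, ChainP (wseq n)
  | 0 => chain_of _ 6 (by decide) (by decide)
  | 1 => chain_of _ 7 (by decide) (by decide)
  | n + 2 => by
    rw [wseq_succ]
    refine chain_step (diffW_clos_dinv (wseq_ne_nil (n + 1)) (mem_wseq (n + 1))) ?_
    rw [rho_dinv (wseq_ne_nil (n + 1)) (mem_wseq (n + 1)), wz n,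
      trm_append_one (head?_Zseq n)]
    exact chain_Zseq n

lemma smooth_wseq (n : ℕ) : SmoothW 1 3 (wseq n) :=
  ⟨mem_wseq n, (chain_wseq n).1, (chain_wseq n).2⟩

lemma three_mem_fseq : ∀ n, 3 ∈ fseq n
  | 0 => by decide
  | n + 1 => by
    rw [fseq_succ]
    have h := head?_dinv 3 1 (fseq_ne_nil n) (pos_of_13 (mem_fseq n))
    exact List.mem_of_mem_head? (by rw [h]; rfl)

lemma fseq_injective : Function.Injective fseq := by
  have hmono : StrictMono fun n => (fseq n).length := by
    apply strictMono_nat_of_lt_succ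
    intro n
    rw [fseq_succ, length_dinv]
    exact lt_sum_of_three _ (pos_of_13 (mem_fseq n)) (three_mem_fseq n)
  intro a b h
  exact hmono.injective (by rw [h])

end Stmt15Aux

open Stmt15Aux in
theorem stmt15 :
    SmoothW 1 3 (lpow [1,1,1,3,1,3,1,1,1,3] 4) ∧
    {u : List ℕ | SmoothW 1 3 (lpow u 4)}.Infinite := by
  constructor
  · exact smooth_wseq 0
  · apply Set.infinite_of_injective_forall_mem fseq_injective
    intro n
    exact smooth_wseq n
end

section
/- Let u be a nonempty word over {a,b} where a and b are positive integers of the same parity, and suppose u has even length. Then for all positive integers k and n, Δ_α^{-k}(uⁿ) = (Δ_α^{-k}(u))ⁿ, and Δ_α^{-k}(u) has even length. -/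
@[simp] lemma dinv_nil (α β : ℕ) : dinv α β [] = [] := rfl
@[simp] lemma dinv_cons (α β x : ℕ) (t : List ℕ) :
    dinv α β (x :: t) = List.replicate x α ++ dinv β α t := rfl

lemma dinv_append (u v : List ℕ) : ∀ α β : ℕ, dinv α β (u ++ v) =
    dinv α β u ++ (if Even u.length then dinv α β v else dinv β α v) := by
  induction u with
  | nil => intro α β; simp
  | cons x t ih =>
      intro α β
      simp only [List.cons_append, dinv_cons, ih, List.length_cons, Nat.even_add_one,
        List.append_assoc]
      by_cases h : Even t.length <;> simp [h]

lemma dinv_append_even (u v : List ℕ) (α β : ℕ) (h : Even u.length) :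
    dinv α β (u ++ v) = dinv α β u ++ dinv α β v := by
  simp [dinv_append, h]

lemma lpow_succ (u : List ℕ) (n : ℕ) : lpow u (n + 1) = u ++ lpow u n := by
  simp [lpow, List.replicate_succ]

lemma dinv_lpow (u : List ℕ) (α β : ℕ) (h : Even u.length) (n : ℕ) :
    dinv α β (lpow u n) = lpow (dinv α β u) n := by
  induction n with
  | zero => simp [lpow]
  | succ m ih => rw [lpow_succ, dinv_append_even u _ _ _ h, ih, lpow_succ]

lemma length_dinv (u : List ℕ) : ∀ α β : ℕ, (dinv α β u).length = u.sum := by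
  induction u with
  | nil => intro α β; simp
  | cons x t ih => intro α β; simp [ih]

lemma mem_dinv (u : List ℕ) : ∀ α β c : ℕ, c ∈ dinv α β u → u ≠ [] → c = α ∨ c = β := by
  induction u with
  | nil => simp
  | cons x t ih =>
      intro α β c hc _
      simp only [dinv_cons, List.mem_append] at hc
      rcases hc with hc | hc
      · left; exact (List.eq_of_mem_replicate hc)
      · rcases t with _ | ⟨y, s⟩
        · simp at hc
        · rcases ih β α c hc (by simp) with h | h
          · right; exact h
          · left; exact h

lemma even_sum (p : ℕ) : ∀ u : List ℕ, (∀ c ∈ u, c % 2 = p) → Even u.length → Even u.sum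
  | [], _, _ => by simp
  | [x], _, h => by simp at h
  | x :: y :: t, hp, h => by
      have h' : Even t.length := by
        rw [Nat.even_iff] at h ⊢; simp only [List.length_cons] at h; omega
      have ht := even_sum p t (fun c hc => hp c (by simp [hc])) h'
      have hx := hp x (by simp)
      have hy := hp y (by simp)
      rw [Nat.even_iff] at ht ⊢
      simp only [List.sum_cons]
      omega

theorem stmt17 (a b : ℕ) (ha : 0 < a) (hab : a < b) (hpar : a % 2 = b % 2)
    (u : List ℕ) (hne : u ≠ []) (hw : WordOver a b u) (hev : Even u.length)
    (α β : ℕ) (hαβ : (α = a ∧ β = b) ∨ (α = b ∧ β = a)) :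
    ∀ k n : ℕ, 0 < k → 0 < n →
      (dinv α β)^[k] (lpow u n) = lpow ((dinv α β)^[k] u) n ∧
      Even ((dinv α β)^[k] u).length := by
  have hα : α % 2 = a % 2 := by rcases hαβ with ⟨h1, _⟩ | ⟨h1, _⟩ <;> omega
  have hβ : β % 2 = a % 2 := by rcases hαβ with ⟨_, h2⟩ | ⟨_, h2⟩ <;> omega
  have key : ∀ k : ℕ,
      (∀ c ∈ (dinv α β)^[k] u, c % 2 = a % 2) ∧ Even ((dinv α β)^[k] u).length ∧
      ∀ n : ℕ, (dinv α β)^[k] (lpow u n) = lpow ((dinv α β)^[k] u) n := by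
    intro k
    induction k with
    | zero =>
        refine ⟨fun c hc => ?_, hev, fun n => rfl⟩
        rcases hw c hc with h | h <;> omega
    | succ m ih =>
        obtain ⟨hmem, heven, heq⟩ := ih
        set w := (dinv α β)^[m] u with hwdef
        have hstep : (dinv α β)^[m + 1] u = dinv α β w := Function.iterate_succ_apply' _ _ _
        refine ⟨?_, ?_, ?_⟩
        · intro c hc
          rw [hstep] at hc
          rcases eq_or_ne w [] with h0 | h0
          · rw [h0] at hc; simp at hc
          · rcases mem_dinv w α β c hc h0 with h | h <;> omega
        · rw [hstep, length_dinv]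
          exact even_sum (a % 2) w (fun c hc => hmem c hc) heven
        · intro n
          rw [Function.iterate_succ_apply', heq n, hstep, dinv_lpow w α β heven n]
  intro k n _ _
  exact ⟨(key k).2.2 n, (key k).2.1⟩
end
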